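/- arXiv:1104.3918 — 3 statements merged into one kernel-verified Lean document; each statement's English description precedes it below -/
import Mathlib

section
/- Relation between the two q-Hermite limits: for every n ≥ 0, Ē†_{−n} = σ( q^{n/2} · τ(Ē_{−n}) ) and Ē†_{n} = σ( q^{-n/2} · τ(Ē_{n}) ), where τ is the K-algebra endomorphism of L with τ(X) = q^{1/2}X (substitution X ↦ q^{1/2}X) and σ is the ℚ-algebra automorphism of L determined by u ↦ u^{-1}, X ↦ X (i.e., q ↦ q^{-1}). -/
/-!
Nonsymmetric continuous q-Hermite polynomials of type A₁ (the `t → 0` and `t → ∞`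
limits of the nonsymmetric Macdonald polynomials), as Laurent polynomials over
`K = ℚ(u)` with `q = u⁴`.
-/

noncomputable section

open LaurentPolynomial

/-- The ground field `K = ℚ(u)`. -/
abbrev K : Type := RatFunc ℚ

/-- `u`, with `q = u⁴` (so `u = q^{1/4}`). -/
def u : K := RatFunc.X

/-- `q = u⁴`. -/
def q : K := u ^ 4

/-- The ring of Laurent polynomials `K[X, X⁻¹]`. -/
abbrev L : Type := LaurentPolynomial K

/-- `∏_{i=0}^{j-1}(1-q^{n-i-1})/(1-q^{1+i})`. -/
def hermProdPos (n j : ℕ) : K :=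
  ∏ i ∈ Finset.range j, (1 - q ^ ((n : ℤ) - i - 1)) / (1 - q ^ ((i : ℤ) + 1))

/-- `∏_{i=0}^{j-1}(1-q^{n-i})/(1-q^{1+i})`. -/
def hermProdNeg (n j : ℕ) : K :=
  ∏ i ∈ Finset.range j, (1 - q ^ ((n : ℤ) - i)) / (1 - q ^ ((i : ℤ) + 1))

/-- `Ē_n` for `n ≥ 1`. -/
def EHpos (n : ℕ) : L :=
  T (n : ℤ)
    + ∑ j ∈ Finset.Icc 1 (n / 2),
        (q ^ ((n : ℤ) - j) * (1 - q ^ (j : ℤ)) / (1 - q ^ ((n : ℤ) - j)) * hermProdPos n j) •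
          T (2 * (j : ℤ) - n)
    + ∑ j ∈ Finset.Icc 1 ((n - 1) / 2),
        (q ^ (j : ℤ) * hermProdPos n j) • T ((n : ℤ) - 2 * j)

/-- `Ē_{-n}` for `n ≥ 1`. -/
def EHneg (n : ℕ) : L :=
  T (-(n : ℤ)) + T (n : ℤ)
    + ∑ j ∈ Finset.Icc 1 (n / 2), hermProdNeg n j • T (2 * (j : ℤ) - n)
    + ∑ j ∈ Finset.Icc 1 ((n - 1) / 2), hermProdNeg n j • T ((n : ℤ) - 2 * j)

/-- The nonsymmetric continuous q-Hermite polynomials `Ē_n`, `n ∈ ℤ`. -/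
def EH : ℤ → L := fun n => if 0 < n then EHpos n.toNat else if n = 0 then 1 else EHneg (-n).toNat

/-- `Ē†_n` for `n ≥ 1`. -/
def EHdagPos (n : ℕ) : L :=
  T (n : ℤ)
    + ∑ j ∈ Finset.Icc 1 (n / 2),
        (q ^ ((n : ℤ) - j - j * ((n : ℤ) - j)) * (1 - q ^ (j : ℤ)) / (1 - q ^ ((n : ℤ) - j)) *
          hermProdPos n j) • T (2 * (j : ℤ) - n)
    + ∑ j ∈ Finset.Icc 1 ((n - 1) / 2),
        (q ^ ((j : ℤ) - j * ((n : ℤ) - j)) * hermProdPos n j) • T ((n : ℤ) - 2 * j)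

/-- `Ē†_{-n}` for `n ≥ 1`. -/
def EHdagNeg (n : ℕ) : L :=
  T (-(n : ℤ)) + q ^ (-(n : ℤ)) • T (n : ℤ)
    + ∑ j ∈ Finset.Icc 1 (n / 2),
        (q ^ (-(j : ℤ) * ((n : ℤ) - j + 1)) * hermProdNeg n j) • T (2 * (j : ℤ) - n)
    + ∑ j ∈ Finset.Icc 1 ((n - 1) / 2),
        (q ^ (2 * (j : ℤ) - n - j * ((n : ℤ) - j + 1)) * hermProdNeg n j) • T ((n : ℤ) - 2 * j)

/-- The `t → ∞` limits `Ē†_n` of the nonsymmetric Macdonald polynomials, `n ∈ ℤ`. -/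
def EHdag : ℤ → L := fun n =>
  if 0 < n then EHdagPos n.toNat else if n = 0 then 1 else EHdagNeg (-n).toNat
/-- The `K`-algebra endomorphism `τ` of `L` with `τ(X) = q^{1/2}X`
(substitution `X ↦ q^{1/2}X`). -/
def tauOp (f : L) : L := f.coeff.sum fun e r => (r * (u ^ 2) ^ e) • T e

/-- The conjugation `u ↦ u⁻¹` of `K = ℚ(u)` (sending a rational function
`num/denom` to `num(u⁻¹)/denom(u⁻¹)`); this is the `ℚ`-algebra automorphism of `K`
determined by `u ↦ u⁻¹`, i.e. `q ↦ q⁻¹`. -/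
def conjU : K → K := RatFunc.eval RatFunc.C (RatFunc.X⁻¹)

/-- The `ℚ`-algebra automorphism `σ` of `L` determined by `u ↦ u⁻¹` (i.e. `q ↦ q⁻¹`)
and `X ↦ X`. -/
def sigmaOp (f : L) : L := f.coeff.sum fun e r => conjU r • T e


/-! ### Auxiliary lemmas -/

lemma u_ne_zero : u ≠ 0 := RatFunc.X_ne_zero
lemma q_ne_zero : q ≠ 0 := pow_ne_zero _ u_ne_zero
lemma u2_ne_zero : (u^2 : K) ≠ 0 := pow_ne_zero _ u_ne_zero

lemma eval2_ne_zero {p : Polynomial ℚ} (hp : p ≠ 0) :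
    Polynomial.eval₂ RatFunc.C (RatFunc.X⁻¹ : K) p ≠ 0 := by
  letI : Invertible (RatFunc.X⁻¹ : K) := invertibleOfNonzero (inv_ne_zero RatFunc.X_ne_zero)
  intro h
  have h2 : Polynomial.eval₂ RatFunc.C (⅟(RatFunc.X⁻¹ : K)) p.reverse = 0 :=
    (Polynomial.eval₂_reverse_eq_zero_iff RatFunc.C (RatFunc.X⁻¹ : K) p).mpr h
  rw [invOf_eq_inv, inv_inv] at h2
  have h3 : Polynomial.eval₂ RatFunc.C (RatFunc.X : K) p.reverse
      = algebraMap (Polynomial ℚ) K p.reverse := by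
    conv_rhs => rw [← Polynomial.eval₂_C_X (p := p.reverse)]
    rw [Polynomial.hom_eval₂]
    congr 1
  rw [h3] at h2
  exact RatFunc.algebraMap_ne_zero (fun hr => hp (Polynomial.reverse_eq_zero.mp hr)) h2

def phiHom : Polynomial ℚ →+* K := Polynomial.eval₂RingHom RatFunc.C (RatFunc.X⁻¹)

lemma phi_mem : nonZeroDivisors (Polynomial ℚ) ≤ Submonoid.comap phiHom (nonZeroDivisors K) := by
  intro p hp
  simp only [Submonoid.mem_comap, mem_nonZeroDivisors_iff_ne_zero] at *
  exact eval2_ne_zero hp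

/-- `conjU` as a ring homomorphism. -/
def psi : RatFunc ℚ →+* K := RatFunc.liftRingHom phiHom phi_mem

lemma conjU_eq (f : K) : conjU f = psi f := by
  have h : psi f = phiHom f.num / phiHom f.denom := by
    conv_lhs => rw [← RatFunc.num_div_denom f]
    exact RatFunc.liftRingHom_apply_div _ _ _ _
  rw [h]
  rfl

lemma psi_algebraMap (p : Polynomial ℚ) : psi (algebraMap (Polynomial ℚ) K p) = phiHom p := by
  have := RatFunc.liftRingHom_apply_div phiHom phi_mem p 1
  rw [map_one, div_one, map_one, div_one] at this
  exact this

lemma psi_u : psi u = u⁻¹ := by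
  rw [show u = algebraMap (Polynomial ℚ) K Polynomial.X from RatFunc.algebraMap_X.symm,
    psi_algebraMap]
  simp [phiHom]

lemma psi_q_zpow (m : ℤ) : psi (q ^ m) = q ^ (-m) := by
  rw [map_zpow₀, show psi q = q⁻¹ from ?_, inv_zpow, ← zpow_neg]
  rw [q, map_pow, psi_u, inv_pow]

lemma psi_u2_zpow (m : ℤ) : psi ((u^2) ^ m) = (u^2) ^ (-m) := by
  rw [map_zpow₀, map_pow, psi_u, inv_pow, inv_zpow, ← zpow_neg]

lemma qq (a b c : ℤ) (h : a + b = c) : q ^ a * q ^ b = q ^ c := by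
  rw [← zpow_add₀ q_ne_zero, h]

lemma uu (a b c : ℤ) (h : a + b = 2 * c) : (u^2) ^ a * (u^2) ^ b = q ^ c := by
  rw [← zpow_add₀ u2_ne_zero, h, zpow_mul]
  congr 1
  rw [q, show ((2:ℤ)) = ((2:ℕ):ℤ) from rfl, zpow_natCast, ← pow_mul]

lemma conjU_factor (a b : ℤ) :
    (1 - q ^ (-a)) / (1 - q ^ (-b)) = q ^ (b - a) * ((1 - q ^ a) / (1 - q ^ b)) := by
  have ha : (1 : K) - q ^ (-a) = -(q ^ (-a)) * (1 - q ^ a) := by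
    have h := qq (-a) a 0 (by ring)
    rw [zpow_zero] at h
    linear_combination -h
  have hb : (1 : K) - q ^ (-b) = -(q ^ (-b)) * (1 - q ^ b) := by
    have h := qq (-b) b 0 (by ring)
    rw [zpow_zero] at h
    linear_combination -h
  rw [ha, hb, neg_mul, neg_mul, neg_div_neg_eq, mul_div_mul_comm,
    ← zpow_sub₀ q_ne_zero]
  congr 2
  ring

lemma sum_aux_neg (n j : ℕ) :
    ∑ i ∈ Finset.range j, (((i:ℤ) + 1) - ((n:ℤ) - i)) = (j:ℤ)*j - n*j := by
  induction j with
  | zero => simp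
  | succ k ih => rw [Finset.sum_range_succ, ih]; push_cast; ring

lemma sum_aux_pos (n j : ℕ) :
    ∑ i ∈ Finset.range j, (((i:ℤ) + 1) - ((n:ℤ) - i - 1)) = (j:ℤ)*j + j - n*j := by
  induction j with
  | zero => simp
  | succ k ih => rw [Finset.sum_range_succ, ih]; push_cast; ring

lemma prod_q_zpow (s : Finset ℕ) (f : ℕ → ℤ) : (∏ i ∈ s, q ^ f i) = q ^ (∑ i ∈ s, f i) := by
  induction s using Finset.cons_induction with
  | empty => simp
  | cons a s ha ih => rw [Finset.prod_cons, Finset.sum_cons, ih, zpow_add₀ q_ne_zero]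

lemma psi_hermProdNeg (n j : ℕ) :
    psi (hermProdNeg n j) = q ^ ((j:ℤ)*j - n*j) * hermProdNeg n j := by
  rw [hermProdNeg, map_prod, ← sum_aux_neg n j, ← prod_q_zpow, ← Finset.prod_mul_distrib]
  refine Finset.prod_congr rfl fun i _ => ?_
  rw [map_div₀, map_sub, map_sub, map_one, psi_q_zpow, psi_q_zpow, conjU_factor]

lemma psi_hermProdPos (n j : ℕ) :
    psi (hermProdPos n j) = q ^ ((j:ℤ)*j + j - n*j) * hermProdPos n j := by
  rw [hermProdPos, map_prod, ← sum_aux_pos n j, ← prod_q_zpow, ← Finset.prod_mul_distrib]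
  refine Finset.prod_congr rfl fun i _ => ?_
  rw [map_div₀, map_sub, map_sub, map_one, psi_q_zpow, psi_q_zpow, conjU_factor]

lemma smul_T_eq (c : K) (e : ℤ) : (c • T e).coeff = Finsupp.single e c := by
  rw [LaurentPolynomial.T]
  change c • Finsupp.single e (1:K) = _
  rw [Finsupp.smul_single, smul_eq_mul, mul_one]

/-- `tauOp` as an additive homomorphism. -/
def tauHom : L →+ L where
  toFun := tauOp
  map_zero' := by simp [tauOp]
  map_add' f g := by
    show tauOp (f + g) = tauOp f + tauOp g
    unfold tauOp
    rw [AddMonoidAlgebra.coeff_add]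
    exact Finsupp.sum_add_index' (fun e => by simp) (fun e r1 r2 => by rw [add_mul, add_smul])

/-- `sigmaOp` as an additive homomorphism. -/
def sigmaHom : L →+ L where
  toFun := sigmaOp
  map_zero' := by simp [sigmaOp]
  map_add' f g := by
    show sigmaOp (f + g) = sigmaOp f + sigmaOp g
    unfold sigmaOp
    rw [AddMonoidAlgebra.coeff_add]
    exact Finsupp.sum_add_index' (fun e => by simp [conjU_eq])
      (fun e r1 r2 => by rw [conjU_eq, conjU_eq, conjU_eq, map_add, add_smul])

lemma tauHom_smul_T (c : K) (e : ℤ) : tauHom (c • T e) = (c * (u ^ 2) ^ e) • T e := by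
  show tauOp _ = _
  rw [tauOp, smul_T_eq, Finsupp.sum_single_index (by simp)]

lemma tauHom_T (e : ℤ) : tauHom (T e) = (u ^ 2) ^ e • T e := by
  have := tauHom_smul_T 1 e
  rw [one_smul, one_mul] at this
  exact this

lemma sigmaHom_smul_T (c : K) (e : ℤ) : sigmaHom (c • T e) = psi c • T e := by
  show sigmaOp _ = _
  rw [sigmaOp, smul_T_eq, Finsupp.sum_single_index (by simp [conjU_eq]), conjU_eq]

lemma sigmaHom_T (e : ℤ) : sigmaHom (T e) = T e := by
  have := sigmaHom_smul_T 1 e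
  rwa [one_smul, map_one, one_smul] at this

lemma tauOp_one : tauOp (1 : L) = 1 := by
  rw [← LaurentPolynomial.T_zero, show tauOp = ⇑tauHom from rfl, tauHom_T, zpow_zero, one_smul]

lemma sigmaOp_one : sigmaOp (1 : L) = 1 := by
  rw [← LaurentPolynomial.T_zero, show sigmaOp = ⇑sigmaHom from rfl, sigmaHom_T]


/-- Relation between the two q-Hermite limits: for every `n ≥ 0`,
`Ē†_{-n} = σ(q^{n/2}·τ(Ē_{-n}))` and `Ē†_n = σ(q^{-n/2}·τ(Ē_n))`. -/
theorem hermite_dag_via_conjugation (n : ℕ) :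
    EHdag (-(n : ℤ)) = sigmaOp (((u ^ 2) ^ (n : ℤ)) • tauOp (EH (-(n : ℤ)))) ∧
    EHdag (n : ℤ) = sigmaOp (((u ^ 2) ^ (-(n : ℤ))) • tauOp (EH (n : ℤ))) := by
  cases n with
  | zero =>
      constructor <;>
        norm_num [EHdag, EH, tauOp_one, sigmaOp_one]
  | succ m =>
      set n := m + 1 with hn
      have hng : ¬ (0:ℤ) < -(n:ℤ) := by omega
      have hnz : ¬ (-(n:ℤ) = 0) := by omega
      have hp : (0:ℤ) < (n:ℤ) := by omega
      have h1 : EHdag (-(n:ℤ)) = EHdagNeg n := by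
        simp only [EHdag, if_neg hng, if_neg hnz, neg_neg, Int.toNat_natCast]
      have h2 : EH (-(n:ℤ)) = EHneg n := by
        simp only [EH, if_neg hng, if_neg hnz, neg_neg, Int.toNat_natCast]
      have h3 : EHdag (n:ℤ) = EHdagPos n := by
        simp only [EHdag, if_pos hp, Int.toNat_natCast]
      have h4 : EH (n:ℤ) = EHpos n := by
        simp only [EH, if_pos hp, Int.toNat_natCast]
      rw [h1, h2, h3, h4]
      constructor
      · rw [EHneg, EHdagNeg]
        simp only [show tauOp = ⇑tauHom from rfl, show sigmaOp = ⇑sigmaHom from rfl, map_add,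
          map_sum, tauHom_T, tauHom_smul_T, smul_add, Finset.smul_sum, smul_smul, sigmaHom_smul_T]
        congr 1
        · congr 1
          · congr 1
            · rw [uu (n:ℤ) (-(n:ℤ)) 0 (by ring), zpow_zero, map_one, one_smul]
            · rw [uu (n:ℤ) (n:ℤ) (n:ℤ) (by ring), psi_q_zpow]
          · refine Finset.sum_congr rfl fun j hj => ?_
            congr 1
            rw [map_mul, map_mul, psi_u2_zpow, psi_u2_zpow, psi_hermProdNeg]
            have hb : (u^2)^(-(n:ℤ)) * (u^2)^(-(2*(j:ℤ)-n)) * q^((j:ℤ)*j-(n:ℤ)*j)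
                = q^(-(j:ℤ)*((n:ℤ)-j+1)) := by
              rw [uu (-(n:ℤ)) (-(2*(j:ℤ)-n)) (-(j:ℤ)) (by ring)]
              exact qq _ _ _ (by ring)
            linear_combination (-(hermProdNeg n j)) * hb
        · refine Finset.sum_congr rfl fun j hj => ?_
          congr 1
          rw [map_mul, map_mul, psi_u2_zpow, psi_u2_zpow, psi_hermProdNeg]
          have hb : (u^2)^(-(n:ℤ)) * (u^2)^(-((n:ℤ)-2*j)) * q^((j:ℤ)*j-(n:ℤ)*j)
              = q^(2*(j:ℤ)-n-j*((n:ℤ)-j+1)) := by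
            rw [uu (-(n:ℤ)) (-((n:ℤ)-2*j)) ((j:ℤ)-n) (by ring)]
            exact qq _ _ _ (by ring)
          linear_combination (-(hermProdNeg n j)) * hb
      · rw [EHpos, EHdagPos]
        simp only [show tauOp = ⇑tauHom from rfl, show sigmaOp = ⇑sigmaHom from rfl, map_add,
          map_sum, tauHom_T, tauHom_smul_T, smul_add, Finset.smul_sum, smul_smul, sigmaHom_smul_T]
        congr 1
        · congr 1
          · rw [uu (-(n:ℤ)) (n:ℤ) 0 (by ring), zpow_zero, map_one, one_smul]
          · refine Finset.sum_congr rfl fun j hj => ?_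
            congr 1
            simp only [map_mul, map_div₀, map_sub, map_one, psi_u2_zpow, psi_q_zpow,
              psi_hermProdPos]
            rw [mul_div_assoc, mul_div_assoc, conjU_factor]
            have hb : (u^2)^(-(-(n:ℤ))) * (u^2)^(-(2*(j:ℤ)-n)) * q^(-((n:ℤ)-j)) *
                q^((n:ℤ)-j-j) * q^((j:ℤ)*j+j-(n:ℤ)*j) = q^((n:ℤ)-j-j*((n:ℤ)-j)) := by
              rw [uu (-(-(n:ℤ))) (-(2*(j:ℤ)-n)) ((n:ℤ)-j) (by ring)]
              simp only [← zpow_add₀ q_ne_zero]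
              congr 1
              ring
            linear_combination (-((1-q^(j:ℤ))/(1-q^((n:ℤ)-j)) * hermProdPos n j)) * hb
        · refine Finset.sum_congr rfl fun j hj => ?_
          congr 1
          simp only [map_mul, map_div₀, map_sub, map_one, psi_u2_zpow, psi_q_zpow,
            psi_hermProdPos]
          have hb : (u^2)^(-(-(n:ℤ))) * (u^2)^(-((n:ℤ)-2*j)) * q^(-(j:ℤ)) *
              q^((j:ℤ)*j+j-(n:ℤ)*j) = q^((j:ℤ)-j*((n:ℤ)-j)) := by
            rw [uu (-(-(n:ℤ))) (-((n:ℤ)-2*j)) (j:ℤ) (by ring)]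
            simp only [← zpow_add₀ q_ne_zero]
            congr 1
            ring
          linear_combination (-(hermProdPos n j)) * hb
end
end

section
/- Pieri rules for nonsymmetric q-Hermite polynomials: X^{-1}·Ē_{−n} = Ē_{−n−1} − Ē_{n+1} for all n ≥ 0; X^{-1}·Ē_n = (1 − q^{n−1})·Ē_{n−1} + q^{n−1}·Ē_{1−n} for all n ≥ 1; X·Ē_{−n} = (1 − qⁿ)·Ē_{1−n} + Ē_{n+1} for all n ≥ 0; and X·Ē_n = Ē_{n+1} − qⁿ·Ē_{1−n} for all n ≥ 1. -/
/-!
Nonsymmetric continuous q-Hermite polynomials of type A₁ (the `t → 0` and `t → ∞`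
limits of the nonsymmetric Macdonald polynomials), as Laurent polynomials over
`K = ℚ(u)` with `q = u⁴`.
-/

noncomputable section

open LaurentPolynomial

set_option maxHeartbeats 1000000

lemma q_pow_ne_one {m : ℤ} (hm : 1 ≤ m) : q ^ m ≠ 1 := by
  intro h
  have h2 : q ^ m = q ^ (m.toNat : ℤ) := by rw [Int.toNat_of_nonneg (by omega)]
  rw [h2, zpow_natCast] at h
  have h3 : (RatFunc.X : K) ^ (4 * m.toNat) = 1 := by rw [pow_mul]; exact h
  have h4 : (Polynomial.X : Polynomial ℚ) ^ (4 * m.toNat) = 1 := by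
    apply RatFunc.algebraMap_injective (K := ℚ)
    simpa [map_pow, RatFunc.algebraMap_X] using h3
  have := congrArg Polynomial.natDegree h4
  simp [Polynomial.natDegree_X_pow] at this
  omega

lemma one_sub_ne {m : ℤ} (hm : 1 ≤ m) : 1 - q ^ m ≠ 0 :=
  sub_ne_zero.mpr (Ne.symm (q_pow_ne_one hm))

lemma q_add {a b : ℤ} : q ^ (a + b) = q ^ a * q ^ b := zpow_add₀ q_ne_zero a b

lemma Pshift (n j : ℕ) : hermProdPos (n+1) j = hermProdNeg n j := by
  unfold hermProdPos hermProdNeg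
  refine Finset.prod_congr rfl fun i _ => ?_
  congr 2
  push_cast; ring

lemma Qsucc (n j : ℕ) : hermProdNeg n (j+1)
    = hermProdNeg n j * ((1 - q ^ ((n:ℤ) - j)) / (1 - q ^ ((j:ℤ) + 1))) :=
  Finset.prod_range_succ _ _

lemma Qratio {n j : ℕ} (h : j ≤ n) :
    (1 - q ^ ((n:ℤ) + 1 - j)) * hermProdNeg (n+1) j
      = (1 - q ^ ((n:ℤ) + 1)) * hermProdNeg n j := by
  induction j with
  | zero => simp [hermProdNeg]
  | succ k ih =>
    have hk : k ≤ n := by omega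
    have ih := ih hk
    have hd : (1 - q ^ ((k:ℤ) + 1)) ≠ 0 := one_sub_ne (by omega)
    rw [Qsucc, Qsucc]
    push_cast
    field_simp
    ring_nf
    ring_nf at ih
    linear_combination (1 - q ^ ((n:ℤ) - k)) * ih

lemma I1 {n k : ℕ} (h : k + 1 ≤ n) :
    hermProdNeg (n+1) (k+1) = q ^ ((k:ℤ)+1) * hermProdNeg n (k+1) + hermProdNeg n k := by
  have hd1 : (1 - q ^ ((k:ℤ) + 1)) ≠ 0 := one_sub_ne (by omega)
  have hd2 : (1 - q ^ ((n:ℤ) - k)) ≠ 0 := one_sub_ne (by omega)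
  have hq : q ^ ((n:ℤ) - k) * q ^ ((k:ℤ) + 1) = q ^ ((n:ℤ) + 1) := by
    rw [← q_add]; ring_nf
  have hr := Qratio (n := n) (j := k+1) h
  push_cast at hr
  have e : (n:ℤ) + 1 - ((k:ℤ)+1) = (n:ℤ) - k := by ring
  rw [e, ← hq] at hr
  have hB : hermProdNeg n (k+1) = hermProdNeg n k * (1 - q ^ ((n:ℤ) - k)) / (1 - q ^ ((k:ℤ)+1)) := by
    rw [Qsucc]; ring
  have hA : hermProdNeg (n+1) (k+1)
      = (1 - q ^ ((n:ℤ) - k) * q ^ ((k:ℤ)+1)) * hermProdNeg n (k+1) / (1 - q ^ ((n:ℤ) - k)) := by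
    rw [eq_div_iff hd2]; linear_combination hr
  rw [hA, hB]
  field_simp
  ring

lemma I2 {n j : ℕ} (h : j ≤ n) :
    hermProdNeg (n+1) j = hermProdNeg n j
      + q ^ ((n:ℤ) + 1 - j) * (1 - q ^ (j:ℤ)) / (1 - q ^ ((n:ℤ) + 1 - j)) * hermProdNeg n j := by
  have hr := Qratio (n := n) (j := j) h
  have hd : (1 - q ^ ((n:ℤ) + 1 - j)) ≠ 0 := one_sub_ne (by omega)
  have hq : q ^ ((n:ℤ) + 1 - j) * q ^ (j:ℤ) = q ^ ((n:ℤ) + 1) := by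
    rw [← q_add]; ring_nf
  rw [← hq] at hr
  have hA : hermProdNeg (n+1) j
      = (1 - q ^ ((n:ℤ) + 1 - j) * q ^ (j:ℤ)) * hermProdNeg n j / (1 - q ^ ((n:ℤ) + 1 - j)) := by
    rw [eq_div_iff hd]; linear_combination hr
  rw [hA]
  field_simp
  ring

lemma I3 {n k : ℕ} (h : k + 1 ≤ n) :
    (1 - q ^ ((k:ℤ)+1)) * hermProdNeg (n+1) (k+1)
      = (1 - q ^ ((n:ℤ)+1)) * hermProdNeg n k := by
  have hd1 : (1 - q ^ ((k:ℤ) + 1)) ≠ 0 := one_sub_ne (by omega)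
  have hd2 : (1 - q ^ ((n:ℤ) - k)) ≠ 0 := one_sub_ne (by omega)
  have hr := Qratio (n := n) (j := k+1) h
  push_cast at hr
  have e : (n:ℤ) + 1 - ((k:ℤ)+1) = (n:ℤ) - k := by ring
  rw [e] at hr
  have hB : hermProdNeg n (k+1) = hermProdNeg n k * (1 - q ^ ((n:ℤ) - k)) / (1 - q ^ ((k:ℤ)+1)) := by
    rw [Qsucc]; ring
  have hA : hermProdNeg (n+1) (k+1)
      = (1 - q ^ ((n:ℤ)+1)) * hermProdNeg n (k+1) / (1 - q ^ ((n:ℤ) - k)) := by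
    rw [eq_div_iff hd2]; linear_combination hr
  rw [hA, hB]
  field_simp

lemma I5 {m j : ℕ} (h : j ≤ m) :
    hermProdNeg (m+1) j = (1 - q ^ ((m:ℤ)+1)) * hermProdNeg m j
      + q ^ ((m:ℤ) + 1 - j) * (1 - q ^ ((j:ℤ)+1)) / (1 - q ^ ((m:ℤ) + 1 - j))
          * hermProdNeg (m+1) (j+1) := by
  have hr := Qratio (n := m) (j := j) h
  have hd1 : (1 - q ^ ((j:ℤ) + 1)) ≠ 0 := one_sub_ne (by omega)
  have hd2 : (1 - q ^ ((m:ℤ) + 1 - j)) ≠ 0 := one_sub_ne (by omega)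
  have hB : hermProdNeg (m+1) (j+1)
      = hermProdNeg (m+1) j * (1 - q ^ ((m:ℤ) + 1 - j)) / (1 - q ^ ((j:ℤ)+1)) := by
    rw [Qsucc]; push_cast; ring_nf
  have hA : hermProdNeg (m+1) j
      = (1 - q ^ ((m:ℤ)+1)) * hermProdNeg m j / (1 - q ^ ((m:ℤ) + 1 - j)) := by
    rw [eq_div_iff hd2]; linear_combination hr
  rw [hB, hA]
  field_simp
  ring

lemma I4 (k : ℕ) : hermProdNeg (2*k+1) (k+1) = hermProdNeg (2*k+1) k := by
  have hd1 : (1 - q ^ ((k:ℤ) + 1)) ≠ 0 := one_sub_ne (by omega)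
  have : ((2*k+1 : ℕ) : ℤ) - k = (k:ℤ) + 1 := by push_cast; ring
  rw [Qsucc, this, div_self hd1, mul_one]

lemma T_mul_T (a b : ℤ) : (T a : L) * T b = T (a + b) := (T_add a b).symm

lemma T_mul_smul (a b : ℤ) (c : K) : (T a : L) * (c • T b) = c • T (a + b) := by
  rw [mul_smul_comm, T_mul_T]

lemma Q0 (n : ℕ) : hermProdNeg n 0 = 1 := by simp [hermProdNeg]

lemma smul_T_congr {c c' : K} {e e' : ℤ} (h1 : c = c') (h2 : e = e') :
    c • (T e : L) = c' • T e' := by rw [h1, h2]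

lemma sum_Icc_one_succ (t : ℕ) (F : ℕ → L) :
    ∑ j ∈ Finset.Icc 1 (t+1), F j = F 1 + ∑ j ∈ Finset.Icc 1 t, F (j+1) := by
  induction t with
  | zero => simp
  | succ s ih =>
    rw [Finset.sum_Icc_succ_top (by omega), ih, Finset.sum_Icc_succ_top (by omega)]
    ring

lemma T_mul_EHneg (a : ℤ) (n : ℕ) :
    T a * EHneg n =
      T (a + -(n:ℤ)) + T (a + (n:ℤ))
        + ∑ j ∈ Finset.Icc 1 (n/2), hermProdNeg n j • T (a + (2*(j:ℤ) - n))
        + ∑ j ∈ Finset.Icc 1 ((n-1)/2), hermProdNeg n j • T (a + ((n:ℤ) - 2*j)) := by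
  simp only [EHneg, mul_add, Finset.mul_sum, T_mul_smul, T_mul_T]

lemma mem_Icc_le {j a b : ℕ} (h : j ∈ Finset.Icc a b) : a ≤ j ∧ j ≤ b := by
  simpa using h

lemma core1a (t : ℕ) : T (-1) * EHneg (2*t+2) = EHneg (2*t+3) - EHpos (2*t+3) := by
  have hL : T (-1) * EHneg (2*t+2)
      = T (-2*(t:ℤ)-3) + T (2*(t:ℤ)+1)
        + ∑ j ∈ Finset.Icc 1 (t+1), hermProdNeg (2*t+2) j • T (2*(j:ℤ)-2*(t:ℤ)-3)
        + ∑ j ∈ Finset.Icc 1 t, hermProdNeg (2*t+2) j • T (2*(t:ℤ)+1-2*(j:ℤ)) := by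
    rw [T_mul_EHneg,
      show (2*t+2)/2 = t+1 from by omega, show (2*t+2-1)/2 = t from by omega]
    congr 1
    · congr 1
      · congr 1
        · exact congrArg T (by push_cast; ring)
        · exact congrArg T (by push_cast; ring)
      · exact Finset.sum_congr rfl fun j hj => smul_T_congr rfl (by push_cast; ring)
    · exact Finset.sum_congr rfl fun j hj => smul_T_congr rfl (by push_cast; ring)
  have hS35 :
      (∑ j ∈ Finset.Icc 1 (t+1), hermProdNeg (2*t+3) j • T (2 * (j:ℤ) - ((2*t+3 : ℕ) : ℤ)) : L)
        - ∑ j ∈ Finset.Icc 1 (t+1),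
            (q ^ (((2*t+3 : ℕ) : ℤ) - j) * (1 - q ^ (j : ℤ)) / (1 - q ^ (((2*t+3 : ℕ) : ℤ) - j))
              * hermProdPos (2*t+3) j) • T (2 * (j:ℤ) - ((2*t+3 : ℕ) : ℤ))
      = ∑ j ∈ Finset.Icc 1 (t+1), hermProdNeg (2*t+2) j • T (2*(j:ℤ)-2*(t:ℤ)-3) := by
    rw [← Finset.sum_sub_distrib]
    refine Finset.sum_congr rfl fun j hj => ?_
    obtain ⟨hj1, hj2⟩ := mem_Icc_le hj
    rw [← sub_smul]
    refine smul_T_congr ?_ (by push_cast; ring)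
    have h2 := I2 (n := 2*t+2) (j := j) (by omega)
    have hP := Pshift (2*t+2) j
    rw [show 2*t+2+1 = 2*t+3 from by omega] at h2 hP
    rw [hP]
    push_cast at h2 ⊢
    ring_nf at h2 ⊢
    linear_combination h2
  have hS46 :
      (∑ j ∈ Finset.Icc 1 (t+1), hermProdNeg (2*t+3) j • T (((2*t+3 : ℕ) : ℤ) - 2 * j) : L)
        - ∑ j ∈ Finset.Icc 1 (t+1),
            (q ^ (j : ℤ) * hermProdPos (2*t+3) j) • T (((2*t+3 : ℕ) : ℤ) - 2 * j)
      = T (2*(t:ℤ)+1) + ∑ j ∈ Finset.Icc 1 t, hermProdNeg (2*t+2) j • T (2*(t:ℤ)+1-2*(j:ℤ)) := by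
    rw [← Finset.sum_sub_distrib]
    have step : ∀ j ∈ Finset.Icc 1 (t+1),
        (hermProdNeg (2*t+3) j • T (((2*t+3 : ℕ) : ℤ) - 2 * j) : L)
          - (q ^ (j : ℤ) * hermProdPos (2*t+3) j) • T (((2*t+3 : ℕ) : ℤ) - 2 * j)
        = hermProdNeg (2*t+2) (j-1) • T (2*(t:ℤ)+3-2*(j:ℤ)) := by
      intro j hj
      obtain ⟨hj1, hj2⟩ := mem_Icc_le hj
      obtain ⟨k, rfl⟩ : ∃ k, j = k+1 := ⟨j-1, by omega⟩
      rw [← sub_smul]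
      refine smul_T_congr ?_ (by push_cast; ring)
      have h1 := I1 (n := 2*t+2) (k := k) (by omega)
      have hP := Pshift (2*t+2) (k+1)
      rw [show 2*t+2+1 = 2*t+3 from by omega] at h1 hP
      rw [hP, show k+1-1 = k from by omega]
      push_cast at h1 ⊢
      ring_nf at h1 ⊢
      linear_combination h1
    rw [Finset.sum_congr rfl step,
      sum_Icc_one_succ t (fun j => hermProdNeg (2*t+2) (j-1) • T (2*(t:ℤ)+3-2*(j:ℤ)))]
    simp only [Nat.add_sub_cancel]
    congr 1
    · rw [show (1:ℕ)-1 = 0 from rfl, Q0, one_smul]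
      congr 1; push_cast; ring
    · exact Finset.sum_congr rfl fun j hj => smul_T_congr rfl (by push_cast; ring)
  have hR : EHneg (2*t+3) - EHpos (2*t+3)
      = T (-2*(t:ℤ)-3) + T (2*(t:ℤ)+1)
        + ∑ j ∈ Finset.Icc 1 (t+1), hermProdNeg (2*t+2) j • T (2*(j:ℤ)-2*(t:ℤ)-3)
        + ∑ j ∈ Finset.Icc 1 t, hermProdNeg (2*t+2) j • T (2*(t:ℤ)+1-2*(j:ℤ)) := by
    simp only [EHneg, EHpos]
    rw [show (2*t+3)/2 = t+1 from by omega, show (2*t+3-1)/2 = t+1 from by omega]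
    calc _ = (T (-((2*t+3 : ℕ) : ℤ)) : L)
          + ((∑ j ∈ Finset.Icc 1 (t+1), hermProdNeg (2*t+3) j • T (2 * (j:ℤ) - ((2*t+3 : ℕ) : ℤ)) : L)
            - ∑ j ∈ Finset.Icc 1 (t+1),
                (q ^ (((2*t+3 : ℕ) : ℤ) - j) * (1 - q ^ (j : ℤ)) / (1 - q ^ (((2*t+3 : ℕ) : ℤ) - j))
                  * hermProdPos (2*t+3) j) • T (2 * (j:ℤ) - ((2*t+3 : ℕ) : ℤ)))
          + ((∑ j ∈ Finset.Icc 1 (t+1), hermProdNeg (2*t+3) j • T (((2*t+3 : ℕ) : ℤ) - 2 * j) : L)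
            - ∑ j ∈ Finset.Icc 1 (t+1),
                (q ^ (j : ℤ) * hermProdPos (2*t+3) j) • T (((2*t+3 : ℕ) : ℤ) - 2 * j)) := by ring
    _ = _ := by
        rw [hS35, hS46]
        have : (T (-((2*t+3 : ℕ) : ℤ)) : L) = T (-2*(t:ℤ)-3) := by congr 1; push_cast; ring
        rw [this]; ring
  rw [hL, hR]

lemma core1b (t : ℕ) : T (-1) * EHneg (2*t+1) = EHneg (2*t+2) - EHpos (2*t+2) := by
  have hL : T (-1) * EHneg (2*t+1)
      = T (-2*(t:ℤ)-2) + T (2*(t:ℤ))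
        + ∑ j ∈ Finset.Icc 1 t, hermProdNeg (2*t+1) j • T (2*(j:ℤ)-2*(t:ℤ)-2)
        + ∑ j ∈ Finset.Icc 1 t, hermProdNeg (2*t+1) j • T (2*(t:ℤ)-2*(j:ℤ)) := by
    rw [T_mul_EHneg,
      show (2*t+1)/2 = t from by omega, show (2*t+1-1)/2 = t from by omega]
    congr 1
    · congr 1
      · congr 1
        · exact congrArg T (by push_cast; ring)
        · exact congrArg T (by push_cast; ring)
      · exact Finset.sum_congr rfl fun j hj => smul_T_congr rfl (by push_cast; ring)
    · exact Finset.sum_congr rfl fun j hj => smul_T_congr rfl (by push_cast; ring)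
  have hS35 :
      (∑ j ∈ Finset.Icc 1 (t+1), hermProdNeg (2*t+2) j • T (2 * (j:ℤ) - ((2*t+2 : ℕ) : ℤ)) : L)
        - ∑ j ∈ Finset.Icc 1 (t+1),
            (q ^ (((2*t+2 : ℕ) : ℤ) - j) * (1 - q ^ (j : ℤ)) / (1 - q ^ (((2*t+2 : ℕ) : ℤ) - j))
              * hermProdPos (2*t+2) j) • T (2 * (j:ℤ) - ((2*t+2 : ℕ) : ℤ))
      = ∑ j ∈ Finset.Icc 1 t, hermProdNeg (2*t+1) j • T (2*(j:ℤ)-2*(t:ℤ)-2)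
          + hermProdNeg (2*t+1) t • T 0 := by
    rw [← Finset.sum_sub_distrib]
    have step : ∀ j ∈ Finset.Icc 1 (t+1),
        (hermProdNeg (2*t+2) j • T (2 * (j:ℤ) - ((2*t+2 : ℕ) : ℤ)) : L)
          - (q ^ (((2*t+2 : ℕ) : ℤ) - j) * (1 - q ^ (j : ℤ)) / (1 - q ^ (((2*t+2 : ℕ) : ℤ) - j))
              * hermProdPos (2*t+2) j) • T (2 * (j:ℤ) - ((2*t+2 : ℕ) : ℤ))
        = hermProdNeg (2*t+1) j • T (2*(j:ℤ)-2*(t:ℤ)-2) := by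
      intro j hj
      obtain ⟨hj1, hj2⟩ := mem_Icc_le hj
      rw [← sub_smul]
      refine smul_T_congr ?_ (by push_cast; ring)
      have h2 := I2 (n := 2*t+1) (j := j) (by omega)
      have hP := Pshift (2*t+1) j
      rw [show 2*t+1+1 = 2*t+2 from by omega] at h2 hP
      rw [hP]
      push_cast at h2 ⊢
      ring_nf at h2 ⊢
      linear_combination h2
    rw [Finset.sum_congr rfl step, Finset.sum_Icc_succ_top (by omega)
      (fun j => hermProdNeg (2*t+1) j • T (2*(j:ℤ)-2*(t:ℤ)-2))]
    congr 1
    exact smul_T_congr (I4 t) (by push_cast; ring)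
  have hS46 :
      (∑ j ∈ Finset.Icc 1 t, hermProdNeg (2*t+2) j • T (((2*t+2 : ℕ) : ℤ) - 2 * j) : L)
        - ∑ j ∈ Finset.Icc 1 t,
            (q ^ (j : ℤ) * hermProdPos (2*t+2) j) • T (((2*t+2 : ℕ) : ℤ) - 2 * j)
      = T (2*(t:ℤ)) + ∑ j ∈ Finset.Icc 1 t, hermProdNeg (2*t+1) j • T (2*(t:ℤ)-2*(j:ℤ))
          - hermProdNeg (2*t+1) t • T 0 := by
    rw [← Finset.sum_sub_distrib]
    have step : ∀ j ∈ Finset.Icc 1 t,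
        (hermProdNeg (2*t+2) j • T (((2*t+2 : ℕ) : ℤ) - 2 * j) : L)
          - (q ^ (j : ℤ) * hermProdPos (2*t+2) j) • T (((2*t+2 : ℕ) : ℤ) - 2 * j)
        = hermProdNeg (2*t+1) (j-1) • T (2*(t:ℤ)+2-2*(j:ℤ)) := by
      intro j hj
      obtain ⟨hj1, hj2⟩ := mem_Icc_le hj
      obtain ⟨k, rfl⟩ : ∃ k, j = k+1 := ⟨j-1, by omega⟩
      rw [← sub_smul]
      refine smul_T_congr ?_ (by push_cast; ring)
      have h1 := I1 (n := 2*t+1) (k := k) (by omega)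
      have hP := Pshift (2*t+1) (k+1)
      rw [show 2*t+1+1 = 2*t+2 from by omega] at h1 hP
      rw [hP, show k+1-1 = k from by omega]
      push_cast at h1 ⊢
      ring_nf at h1 ⊢
      linear_combination h1
    rw [Finset.sum_congr rfl step]
    have hA := sum_Icc_one_succ t
      ((fun j => hermProdNeg (2*t+1) (j-1) • T (2*(t:ℤ)+2-2*(j:ℤ))) : ℕ → L)
    have hB := Finset.sum_Icc_succ_top (show 1 ≤ t+1 by omega)
      ((fun j => hermProdNeg (2*t+1) (j-1) • T (2*(t:ℤ)+2-2*(j:ℤ))) : ℕ → L)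
    beta_reduce at hA hB
    have key : (∑ j ∈ Finset.Icc 1 t, hermProdNeg (2*t+1) (j+1-1) • T (2*(t:ℤ)+2-2*((j+1:ℕ):ℤ)) : L)
        = ∑ j ∈ Finset.Icc 1 t, hermProdNeg (2*t+1) j • T (2*(t:ℤ)-2*(j:ℤ)) :=
      Finset.sum_congr rfl fun j hj => by
        rw [show j+1-1 = j from by omega]; exact smul_T_congr rfl (by push_cast; ring)
    have eF1 : (hermProdNeg (2*t+1) (1-1) • T (2*(t:ℤ)+2-2*((1:ℕ):ℤ)) : L) = T (2*(t:ℤ)) := by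
      rw [show (1:ℕ)-1 = 0 from rfl, Q0, one_smul]
      exact congrArg T (by push_cast; ring)
    have eFt : (hermProdNeg (2*t+1) (t+1-1) • T (2*(t:ℤ)+2-2*((t+1:ℕ):ℤ)) : L)
        = hermProdNeg (2*t+1) t • T 0 := by
      rw [show t+1-1 = t from by omega]
      exact smul_T_congr rfl (by push_cast; ring)
    rw [key, eF1] at hA
    rw [eFt] at hB
    linear_combination hA - hB
  have hR : EHneg (2*t+2) - EHpos (2*t+2)
      = T (-2*(t:ℤ)-2) + T (2*(t:ℤ))
        + ∑ j ∈ Finset.Icc 1 t, hermProdNeg (2*t+1) j • T (2*(j:ℤ)-2*(t:ℤ)-2)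
        + ∑ j ∈ Finset.Icc 1 t, hermProdNeg (2*t+1) j • T (2*(t:ℤ)-2*(j:ℤ)) := by
    simp only [EHneg, EHpos]
    rw [show (2*t+2)/2 = t+1 from by omega, show (2*t+2-1)/2 = t from by omega]
    calc _ = (T (-((2*t+2 : ℕ) : ℤ)) : L)
          + ((∑ j ∈ Finset.Icc 1 (t+1), hermProdNeg (2*t+2) j • T (2 * (j:ℤ) - ((2*t+2 : ℕ) : ℤ)) : L)
            - ∑ j ∈ Finset.Icc 1 (t+1),
                (q ^ (((2*t+2 : ℕ) : ℤ) - j) * (1 - q ^ (j : ℤ)) / (1 - q ^ (((2*t+2 : ℕ) : ℤ) - j))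
                  * hermProdPos (2*t+2) j) • T (2 * (j:ℤ) - ((2*t+2 : ℕ) : ℤ)))
          + ((∑ j ∈ Finset.Icc 1 t, hermProdNeg (2*t+2) j • T (((2*t+2 : ℕ) : ℤ) - 2 * j) : L)
            - ∑ j ∈ Finset.Icc 1 t,
                (q ^ (j : ℤ) * hermProdPos (2*t+2) j) • T (((2*t+2 : ℕ) : ℤ) - 2 * j)) := by ring
    _ = _ := by
        rw [hS35, hS46]
        have : (T (-((2*t+2 : ℕ) : ℤ)) : L) = T (-2*(t:ℤ)-2) := congrArg T (by push_cast; ring)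
        rw [this]; ring
  rw [hL, hR]

lemma core3a (t : ℕ) :
    T 1 * EHneg (2*t+2)
      = (1 - q ^ (2*(t:ℤ)+2)) • EHneg (2*t+1) + EHpos (2*t+3) := by
  have hL : T 1 * EHneg (2*t+2)
      = T (-2*(t:ℤ)-1) + T (2*(t:ℤ)+3)
        + (∑ j ∈ Finset.Icc 1 t, hermProdNeg (2*t+2) j • T (2*(j:ℤ)-2*(t:ℤ)-1)
            + hermProdNeg (2*t+2) (t+1) • T 1)
        + ∑ j ∈ Finset.Icc 1 t, hermProdNeg (2*t+2) j • T (2*(t:ℤ)+3-2*(j:ℤ)) := by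
    rw [T_mul_EHneg,
      show (2*t+2)/2 = t+1 from by omega, show (2*t+2-1)/2 = t from by omega]
    congr 1
    · congr 1
      · congr 1
        · exact congrArg T (by push_cast; ring)
        · exact congrArg T (by push_cast; ring)
      · rw [Finset.sum_Icc_succ_top (show 1 ≤ t+1 by omega)
            ((fun j => hermProdNeg (2*t+2) j • T (1 + (2*(j:ℤ) - ((2*t+2:ℕ):ℤ)))) : ℕ → L)]
        beta_reduce
        congr 1
        · exact Finset.sum_congr rfl fun j hj => smul_T_congr rfl (by push_cast; ring)
        · exact smul_T_congr rfl (by push_cast; ring)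
    · exact Finset.sum_congr rfl fun j hj => smul_T_congr rfl (by push_cast; ring)
  have hNeg : (1 - q ^ (2*(t:ℤ)+2)) • (T (-((2*t+1:ℕ):ℤ)) : L)
        + ∑ j ∈ Finset.Icc 1 (t+1),
            (q ^ (((2*t+3:ℕ):ℤ) - j) * (1 - q ^ (j:ℤ)) / (1 - q ^ (((2*t+3:ℕ):ℤ) - j))
              * hermProdPos (2*t+3) j) • T (2*(j:ℤ) - ((2*t+3:ℕ):ℤ))
        + ∑ j ∈ Finset.Icc 1 t,
            ((1 - q ^ (2*(t:ℤ)+2)) * hermProdNeg (2*t+1) j) • T (2*(j:ℤ) - ((2*t+1:ℕ):ℤ))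
      = T (-2*(t:ℤ)-1)
        + ∑ j ∈ Finset.Icc 1 t, hermProdNeg (2*t+2) j • T (2*(j:ℤ)-2*(t:ℤ)-1) := by
    have hA := sum_Icc_one_succ t
      ((fun j => (q ^ (((2*t+3:ℕ):ℤ) - j) * (1 - q ^ (j:ℤ)) / (1 - q ^ (((2*t+3:ℕ):ℤ) - j))
          * hermProdPos (2*t+3) j) • T (2*(j:ℤ) - ((2*t+3:ℕ):ℤ))) : ℕ → L)
    beta_reduce at hA
    rw [hA]
    have eI : (1 - q ^ (2*(t:ℤ)+2)) • (T (-((2*t+1:ℕ):ℤ)) : L)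
        + (q ^ (((2*t+3:ℕ):ℤ) - ((1:ℕ):ℤ)) * (1 - q ^ ((1:ℕ):ℤ))
            / (1 - q ^ (((2*t+3:ℕ):ℤ) - ((1:ℕ):ℤ)))
            * hermProdPos (2*t+3) 1) • T (2*((1:ℕ):ℤ) - ((2*t+3:ℕ):ℤ))
        = T (-2*(t:ℤ)-1) := by
      rw [show (T (-((2*t+1:ℕ):ℤ)) : L) = T (-2*(t:ℤ)-1) from congrArg T (by push_cast; ring),
        show (T (2*((1:ℕ):ℤ) - ((2*t+3:ℕ):ℤ)) : L) = T (-2*(t:ℤ)-1) from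
          congrArg T (by push_cast; ring), ← add_smul]
      have h5 := I5 (m := 2*t+1) (j := 0) (by omega)
      have hP := Pshift (2*t+2) 1
      rw [show 2*t+1+1 = 2*t+2 from by omega, Q0, Q0] at h5
      rw [show 2*t+2+1 = 2*t+3 from by omega] at hP
      rw [hP]
      have hone : (1 - q ^ (2*(t:ℤ)+2)) + q ^ (((2*t+3:ℕ):ℤ) - ((1:ℕ):ℤ)) * (1 - q ^ ((1:ℕ):ℤ))
          / (1 - q ^ (((2*t+3:ℕ):ℤ) - ((1:ℕ):ℤ))) * hermProdNeg (2*t+2) 1 = 1 := by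
        push_cast at h5 ⊢
        ring_nf at h5 ⊢
        linear_combination -h5
      rw [hone, one_smul]
    have eS : ∑ j ∈ Finset.Icc 1 t,
          (((1 - q ^ (2*(t:ℤ)+2)) * hermProdNeg (2*t+1) j) • T (2*(j:ℤ) - ((2*t+1:ℕ):ℤ))
            + (q ^ (((2*t+3:ℕ):ℤ) - ((j+1:ℕ):ℤ)) * (1 - q ^ ((j+1:ℕ):ℤ))
                / (1 - q ^ (((2*t+3:ℕ):ℤ) - ((j+1:ℕ):ℤ)))
                * hermProdPos (2*t+3) (j+1)) • T (2*((j+1:ℕ):ℤ) - ((2*t+3:ℕ):ℤ)) : L)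
        = ∑ j ∈ Finset.Icc 1 t, hermProdNeg (2*t+2) j • T (2*(j:ℤ)-2*(t:ℤ)-1) := by
      refine Finset.sum_congr rfl fun j hj => ?_
      obtain ⟨hj1, hj2⟩ := mem_Icc_le hj
      rw [show (T (2*(j:ℤ) - ((2*t+1:ℕ):ℤ)) : L) = T (2*(j:ℤ)-2*(t:ℤ)-1) from
          congrArg T (by push_cast; ring),
        show (T (2*((j+1:ℕ):ℤ) - ((2*t+3:ℕ):ℤ)) : L) = T (2*(j:ℤ)-2*(t:ℤ)-1) from
          congrArg T (by push_cast; ring), ← add_smul]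
      refine smul_T_congr ?_ rfl
      have h5 := I5 (m := 2*t+1) (j := j) (by omega)
      have hP := Pshift (2*t+2) (j+1)
      rw [show 2*t+1+1 = 2*t+2 from by omega] at h5
      rw [show 2*t+2+1 = 2*t+3 from by omega] at hP
      rw [hP]
      push_cast at h5 ⊢
      ring_nf at h5 ⊢
      linear_combination -h5
    rw [Finset.sum_add_distrib] at eS
    linear_combination eI + eS
  have hPos : (1 - q ^ (2*(t:ℤ)+2)) • (T (((2*t+1:ℕ):ℤ)) : L)
        + ∑ j ∈ Finset.Icc 1 t,
            ((1 - q ^ (2*(t:ℤ)+2)) * hermProdNeg (2*t+1) j) • T (((2*t+1:ℕ):ℤ) - 2*(j:ℤ))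
        + ∑ j ∈ Finset.Icc 1 (t+1),
            (q ^ (j:ℤ) * hermProdPos (2*t+3) j) • T (((2*t+3:ℕ):ℤ) - 2*(j:ℤ))
      = ∑ j ∈ Finset.Icc 1 t, hermProdNeg (2*t+2) j • T (2*(t:ℤ)+3-2*(j:ℤ))
        + hermProdNeg (2*t+2) (t+1) • T 1 := by
    have hGA := sum_Icc_one_succ t
      ((fun j => ((1 - q ^ (2*(t:ℤ)+2)) * hermProdNeg (2*t+1) (j-1)) • T (2*(t:ℤ)+3-2*(j:ℤ))) : ℕ → L)
    beta_reduce at hGA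
    have eG1 : ((1 - q ^ (2*(t:ℤ)+2)) * hermProdNeg (2*t+1) (1-1)) • (T (2*(t:ℤ)+3-2*((1:ℕ):ℤ)) : L)
        = (1 - q ^ (2*(t:ℤ)+2)) • (T (((2*t+1:ℕ):ℤ)) : L) := by
      rw [show (1:ℕ)-1 = 0 from rfl, Q0, mul_one]
      rw [show (T (2*(t:ℤ)+3-2*((1:ℕ):ℤ)) : L) = T (((2*t+1:ℕ):ℤ)) from
        congrArg T (by push_cast; ring)]
    have eG2 : ∑ j ∈ Finset.Icc 1 t,
          ((1 - q ^ (2*(t:ℤ)+2)) * hermProdNeg (2*t+1) (j+1-1)) • (T (2*(t:ℤ)+3-2*((j+1:ℕ):ℤ)) : L)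
        = ∑ j ∈ Finset.Icc 1 t,
            ((1 - q ^ (2*(t:ℤ)+2)) * hermProdNeg (2*t+1) j) • T (((2*t+1:ℕ):ℤ) - 2*(j:ℤ)) := by
      refine Finset.sum_congr rfl fun j hj => ?_
      rw [show j+1-1 = j from by omega]
      exact smul_T_congr rfl (by push_cast; ring)
    rw [eG1, eG2] at hGA
    have eComb : ∑ j ∈ Finset.Icc 1 (t+1),
          (((1 - q ^ (2*(t:ℤ)+2)) * hermProdNeg (2*t+1) (j-1)) • T (2*(t:ℤ)+3-2*(j:ℤ))
            + (q ^ (j:ℤ) * hermProdPos (2*t+3) j) • T (((2*t+3:ℕ):ℤ) - 2*(j:ℤ)) : L)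
        = ∑ j ∈ Finset.Icc 1 (t+1), hermProdNeg (2*t+2) j • T (2*(t:ℤ)+3-2*(j:ℤ)) := by
      refine Finset.sum_congr rfl fun j hj => ?_
      obtain ⟨hj1, hj2⟩ := mem_Icc_le hj
      obtain ⟨k, rfl⟩ : ∃ k, j = k+1 := ⟨j-1, by omega⟩
      rw [show (T (((2*t+3:ℕ):ℤ) - 2*((k+1:ℕ):ℤ)) : L) = T (2*(t:ℤ)+3-2*((k+1:ℕ):ℤ)) from
          congrArg T (by push_cast; ring), ← add_smul]
      refine smul_T_congr ?_ rfl
      have h3 := I3 (n := 2*t+1) (k := k) (by omega)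
      have hP := Pshift (2*t+2) (k+1)
      rw [show 2*t+1+1 = 2*t+2 from by omega] at h3
      rw [show 2*t+2+1 = 2*t+3 from by omega] at hP
      rw [hP, show k+1-1 = k from by omega]
      push_cast at h3 ⊢
      ring_nf at h3 ⊢
      linear_combination -h3
    have hsplit := Finset.sum_Icc_succ_top (show 1 ≤ t+1 by omega)
      ((fun j => hermProdNeg (2*t+2) j • T (2*(t:ℤ)+3-2*(j:ℤ))) : ℕ → L)
    beta_reduce at hsplit
    have etop : hermProdNeg (2*t+2) (t+1) • (T (2*(t:ℤ)+3-2*((t+1:ℕ):ℤ)) : L)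
        = hermProdNeg (2*t+2) (t+1) • T 1 :=
      smul_T_congr rfl (by push_cast; ring)
    rw [etop] at hsplit
    rw [Finset.sum_add_distrib] at eComb
    linear_combination -hGA + eComb + hsplit
  have hE : (1 - q ^ (2*(t:ℤ)+2)) • EHneg (2*t+1)
      = (1 - q ^ (2*(t:ℤ)+2)) • (T (-((2*t+1:ℕ):ℤ)) : L)
        + (1 - q ^ (2*(t:ℤ)+2)) • (T (((2*t+1:ℕ):ℤ)) : L)
        + ∑ j ∈ Finset.Icc 1 t,
            ((1 - q ^ (2*(t:ℤ)+2)) * hermProdNeg (2*t+1) j) • T (2*(j:ℤ) - ((2*t+1:ℕ):ℤ))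
        + ∑ j ∈ Finset.Icc 1 t,
            ((1 - q ^ (2*(t:ℤ)+2)) * hermProdNeg (2*t+1) j) • T (((2*t+1:ℕ):ℤ) - 2*(j:ℤ)) := by
    simp only [EHneg]
    rw [show (2*t+1)/2 = t from by omega, show (2*t+1-1)/2 = t from by omega]
    simp only [smul_add, Finset.smul_sum, smul_smul]
  have hP3 : EHpos (2*t+3)
      = T (((2*t+3:ℕ):ℤ))
        + ∑ j ∈ Finset.Icc 1 (t+1),
            (q ^ (((2*t+3:ℕ):ℤ) - j) * (1 - q ^ (j:ℤ)) / (1 - q ^ (((2*t+3:ℕ):ℤ) - j))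
              * hermProdPos (2*t+3) j) • T (2*(j:ℤ) - ((2*t+3:ℕ):ℤ))
        + ∑ j ∈ Finset.Icc 1 (t+1),
            (q ^ (j:ℤ) * hermProdPos (2*t+3) j) • T (((2*t+3:ℕ):ℤ) - 2*(j:ℤ)) := by
    simp only [EHpos]
    rw [show (2*t+3)/2 = t+1 from by omega, show (2*t+3-1)/2 = t+1 from by omega]
  rw [hL, hE, hP3]
  rw [show (T (((2*t+3:ℕ):ℤ)) : L) = T (2*(t:ℤ)+3) from congrArg T (by push_cast; ring)]
  linear_combination -hNeg - hPos

lemma core3b (t : ℕ) :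
    T 1 * EHneg (2*t+3)
      = (1 - q ^ (2*(t:ℤ)+3)) • EHneg (2*t+2) + EHpos (2*t+4) := by
  have hL : T 1 * EHneg (2*t+3)
      = T (-2*(t:ℤ)-2) + T (2*(t:ℤ)+4)
        + ∑ j ∈ Finset.Icc 1 (t+1), hermProdNeg (2*t+3) j • T (2*(j:ℤ)-2*(t:ℤ)-2)
        + ∑ j ∈ Finset.Icc 1 (t+1), hermProdNeg (2*t+3) j • T (2*(t:ℤ)+4-2*(j:ℤ)) := by
    rw [T_mul_EHneg,
      show (2*t+3)/2 = t+1 from by omega, show (2*t+3-1)/2 = t+1 from by omega]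
    congr 1
    · congr 1
      · congr 1
        · exact congrArg T (by push_cast; ring)
        · exact congrArg T (by push_cast; ring)
      · exact Finset.sum_congr rfl fun j hj => smul_T_congr rfl (by push_cast; ring)
    · exact Finset.sum_congr rfl fun j hj => smul_T_congr rfl (by push_cast; ring)
  have hNeg : (1 - q ^ (2*(t:ℤ)+3)) • (T (-((2*t+2:ℕ):ℤ)) : L)
        + ∑ j ∈ Finset.Icc 1 (t+2),
            (q ^ (((2*t+4:ℕ):ℤ) - j) * (1 - q ^ (j:ℤ)) / (1 - q ^ (((2*t+4:ℕ):ℤ) - j))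
              * hermProdPos (2*t+4) j) • T (2*(j:ℤ) - ((2*t+4:ℕ):ℤ))
        + ∑ j ∈ Finset.Icc 1 (t+1),
            ((1 - q ^ (2*(t:ℤ)+3)) * hermProdNeg (2*t+2) j) • T (2*(j:ℤ) - ((2*t+2:ℕ):ℤ))
      = T (-2*(t:ℤ)-2)
        + ∑ j ∈ Finset.Icc 1 (t+1), hermProdNeg (2*t+3) j • T (2*(j:ℤ)-2*(t:ℤ)-2) := by
    have hA := sum_Icc_one_succ (t+1)
      ((fun j => (q ^ (((2*t+4:ℕ):ℤ) - j) * (1 - q ^ (j:ℤ)) / (1 - q ^ (((2*t+4:ℕ):ℤ) - j))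
          * hermProdPos (2*t+4) j) • T (2*(j:ℤ) - ((2*t+4:ℕ):ℤ))) : ℕ → L)
    beta_reduce at hA
    rw [show t+1+1 = t+2 from by omega] at hA
    rw [hA]
    have eI : (1 - q ^ (2*(t:ℤ)+3)) • (T (-((2*t+2:ℕ):ℤ)) : L)
        + (q ^ (((2*t+4:ℕ):ℤ) - ((1:ℕ):ℤ)) * (1 - q ^ ((1:ℕ):ℤ))
            / (1 - q ^ (((2*t+4:ℕ):ℤ) - ((1:ℕ):ℤ)))
            * hermProdPos (2*t+4) 1) • T (2*((1:ℕ):ℤ) - ((2*t+4:ℕ):ℤ))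
        = T (-2*(t:ℤ)-2) := by
      rw [show (T (-((2*t+2:ℕ):ℤ)) : L) = T (-2*(t:ℤ)-2) from congrArg T (by push_cast; ring),
        show (T (2*((1:ℕ):ℤ) - ((2*t+4:ℕ):ℤ)) : L) = T (-2*(t:ℤ)-2) from
          congrArg T (by push_cast; ring), ← add_smul]
      have h5 := I5 (m := 2*t+2) (j := 0) (by omega)
      have hP := Pshift (2*t+3) 1
      rw [show 2*t+2+1 = 2*t+3 from by omega, Q0, Q0] at h5
      rw [show 2*t+3+1 = 2*t+4 from by omega] at hP
      rw [hP]
      have hone : (1 - q ^ (2*(t:ℤ)+3)) + q ^ (((2*t+4:ℕ):ℤ) - ((1:ℕ):ℤ)) * (1 - q ^ ((1:ℕ):ℤ))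
          / (1 - q ^ (((2*t+4:ℕ):ℤ) - ((1:ℕ):ℤ))) * hermProdNeg (2*t+3) 1 = 1 := by
        push_cast at h5 ⊢
        ring_nf at h5 ⊢
        linear_combination -h5
      rw [hone, one_smul]
    have eS : ∑ j ∈ Finset.Icc 1 (t+1),
          (((1 - q ^ (2*(t:ℤ)+3)) * hermProdNeg (2*t+2) j) • T (2*(j:ℤ) - ((2*t+2:ℕ):ℤ))
            + (q ^ (((2*t+4:ℕ):ℤ) - ((j+1:ℕ):ℤ)) * (1 - q ^ ((j+1:ℕ):ℤ))
                / (1 - q ^ (((2*t+4:ℕ):ℤ) - ((j+1:ℕ):ℤ)))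
                * hermProdPos (2*t+4) (j+1)) • T (2*((j+1:ℕ):ℤ) - ((2*t+4:ℕ):ℤ)) : L)
        = ∑ j ∈ Finset.Icc 1 (t+1), hermProdNeg (2*t+3) j • T (2*(j:ℤ)-2*(t:ℤ)-2) := by
      refine Finset.sum_congr rfl fun j hj => ?_
      obtain ⟨hj1, hj2⟩ := mem_Icc_le hj
      rw [show (T (2*(j:ℤ) - ((2*t+2:ℕ):ℤ)) : L) = T (2*(j:ℤ)-2*(t:ℤ)-2) from
          congrArg T (by push_cast; ring),
        show (T (2*((j+1:ℕ):ℤ) - ((2*t+4:ℕ):ℤ)) : L) = T (2*(j:ℤ)-2*(t:ℤ)-2) from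
          congrArg T (by push_cast; ring), ← add_smul]
      refine smul_T_congr ?_ rfl
      have h5 := I5 (m := 2*t+2) (j := j) (by omega)
      have hP := Pshift (2*t+3) (j+1)
      rw [show 2*t+2+1 = 2*t+3 from by omega] at h5
      rw [show 2*t+3+1 = 2*t+4 from by omega] at hP
      rw [hP]
      push_cast at h5 ⊢
      ring_nf at h5 ⊢
      linear_combination -h5
    rw [Finset.sum_add_distrib] at eS
    linear_combination eI + eS
  have hPos : (1 - q ^ (2*(t:ℤ)+3)) • (T (((2*t+2:ℕ):ℤ)) : L)
        + ∑ j ∈ Finset.Icc 1 t,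
            ((1 - q ^ (2*(t:ℤ)+3)) * hermProdNeg (2*t+2) j) • T (((2*t+2:ℕ):ℤ) - 2*(j:ℤ))
        + ∑ j ∈ Finset.Icc 1 (t+1),
            (q ^ (j:ℤ) * hermProdPos (2*t+4) j) • T (((2*t+4:ℕ):ℤ) - 2*(j:ℤ))
      = ∑ j ∈ Finset.Icc 1 (t+1), hermProdNeg (2*t+3) j • T (2*(t:ℤ)+4-2*(j:ℤ)) := by
    have hGA := sum_Icc_one_succ t
      ((fun j => ((1 - q ^ (2*(t:ℤ)+3)) * hermProdNeg (2*t+2) (j-1)) • T (2*(t:ℤ)+4-2*(j:ℤ))) : ℕ → L)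
    beta_reduce at hGA
    have eG1 : ((1 - q ^ (2*(t:ℤ)+3)) * hermProdNeg (2*t+2) (1-1)) • (T (2*(t:ℤ)+4-2*((1:ℕ):ℤ)) : L)
        = (1 - q ^ (2*(t:ℤ)+3)) • (T (((2*t+2:ℕ):ℤ)) : L) := by
      rw [show (1:ℕ)-1 = 0 from rfl, Q0, mul_one]
      rw [show (T (2*(t:ℤ)+4-2*((1:ℕ):ℤ)) : L) = T (((2*t+2:ℕ):ℤ)) from
        congrArg T (by push_cast; ring)]
    have eG2 : ∑ j ∈ Finset.Icc 1 t,
          ((1 - q ^ (2*(t:ℤ)+3)) * hermProdNeg (2*t+2) (j+1-1)) • (T (2*(t:ℤ)+4-2*((j+1:ℕ):ℤ)) : L)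
        = ∑ j ∈ Finset.Icc 1 t,
            ((1 - q ^ (2*(t:ℤ)+3)) * hermProdNeg (2*t+2) j) • T (((2*t+2:ℕ):ℤ) - 2*(j:ℤ)) := by
      refine Finset.sum_congr rfl fun j hj => ?_
      rw [show j+1-1 = j from by omega]
      exact smul_T_congr rfl (by push_cast; ring)
    rw [eG1, eG2] at hGA
    have eComb : ∑ j ∈ Finset.Icc 1 (t+1),
          (((1 - q ^ (2*(t:ℤ)+3)) * hermProdNeg (2*t+2) (j-1)) • T (2*(t:ℤ)+4-2*(j:ℤ))
            + (q ^ (j:ℤ) * hermProdPos (2*t+4) j) • T (((2*t+4:ℕ):ℤ) - 2*(j:ℤ)) : L)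
        = ∑ j ∈ Finset.Icc 1 (t+1), hermProdNeg (2*t+3) j • T (2*(t:ℤ)+4-2*(j:ℤ)) := by
      refine Finset.sum_congr rfl fun j hj => ?_
      obtain ⟨hj1, hj2⟩ := mem_Icc_le hj
      obtain ⟨k, rfl⟩ : ∃ k, j = k+1 := ⟨j-1, by omega⟩
      rw [show (T (((2*t+4:ℕ):ℤ) - 2*((k+1:ℕ):ℤ)) : L) = T (2*(t:ℤ)+4-2*((k+1:ℕ):ℤ)) from
          congrArg T (by push_cast; ring), ← add_smul]
      refine smul_T_congr ?_ rfl
      have h3 := I3 (n := 2*t+2) (k := k) (by omega)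
      have hP := Pshift (2*t+3) (k+1)
      rw [show 2*t+2+1 = 2*t+3 from by omega] at h3
      rw [show 2*t+3+1 = 2*t+4 from by omega] at hP
      rw [hP, show k+1-1 = k from by omega]
      push_cast at h3 ⊢
      ring_nf at h3 ⊢
      linear_combination -h3
    rw [Finset.sum_add_distrib] at eComb
    linear_combination -hGA + eComb
  have hE : (1 - q ^ (2*(t:ℤ)+3)) • EHneg (2*t+2)
      = (1 - q ^ (2*(t:ℤ)+3)) • (T (-((2*t+2:ℕ):ℤ)) : L)
        + (1 - q ^ (2*(t:ℤ)+3)) • (T (((2*t+2:ℕ):ℤ)) : L)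
        + ∑ j ∈ Finset.Icc 1 (t+1),
            ((1 - q ^ (2*(t:ℤ)+3)) * hermProdNeg (2*t+2) j) • T (2*(j:ℤ) - ((2*t+2:ℕ):ℤ))
        + ∑ j ∈ Finset.Icc 1 t,
            ((1 - q ^ (2*(t:ℤ)+3)) * hermProdNeg (2*t+2) j) • T (((2*t+2:ℕ):ℤ) - 2*(j:ℤ)) := by
    simp only [EHneg]
    rw [show (2*t+2)/2 = t+1 from by omega, show (2*t+2-1)/2 = t from by omega]
    simp only [smul_add, Finset.smul_sum, smul_smul]
  have hP4 : EHpos (2*t+4)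
      = T (((2*t+4:ℕ):ℤ))
        + ∑ j ∈ Finset.Icc 1 (t+2),
            (q ^ (((2*t+4:ℕ):ℤ) - j) * (1 - q ^ (j:ℤ)) / (1 - q ^ (((2*t+4:ℕ):ℤ) - j))
              * hermProdPos (2*t+4) j) • T (2*(j:ℤ) - ((2*t+4:ℕ):ℤ))
        + ∑ j ∈ Finset.Icc 1 (t+1),
            (q ^ (j:ℤ) * hermProdPos (2*t+4) j) • T (((2*t+4:ℕ):ℤ) - 2*(j:ℤ)) := by
    simp only [EHpos]
    rw [show (2*t+4)/2 = t+2 from by omega, show (2*t+4-1)/2 = t+1 from by omega]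
  rw [hL, hE, hP4]
  rw [show (T (((2*t+4:ℕ):ℤ)) : L) = T (2*(t:ℤ)+4) from congrArg T (by push_cast; ring)]
  linear_combination -hNeg - hPos

lemma EH_zero : EH 0 = 1 := by simp [EH]

lemma EH_natCast (n : ℕ) (h : 1 ≤ n) : EH (n:ℤ) = EHpos n := by
  simp only [EH]
  rw [if_pos (by exact_mod_cast h)]
  simp

lemma EH_neg_natCast (n : ℕ) (h : 1 ≤ n) : EH (-(n:ℤ)) = EHneg n := by
  simp only [EH]
  rw [if_neg (by omega), if_neg (by omega)]
  simp

lemma EHpos_one : EHpos 1 = T 1 := by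
  simp [EHpos]

lemma EHneg_one : EHneg 1 = T (-1) + T 1 := by
  simp [EHneg]

lemma EHpos_two : EHpos 2 = T 2 + q ^ (1:ℤ) • T 0 := by
  have h1 : (1:K) - q ^ (1:ℤ) ≠ 0 := one_sub_ne le_rfl
  have hP : hermProdPos 2 1 = 1 := by
    rw [hermProdPos, Finset.prod_range_one,
      show ((2:ℕ):ℤ) - ((0:ℕ):ℤ) - 1 = 1 from by norm_num,
      show ((0:ℕ):ℤ) + 1 = 1 from by norm_num]
    exact div_self h1
  simp only [EHpos, show (2:ℕ)/2 = 1 from rfl, show (2-1:ℕ)/2 = 0 from rfl,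
    Finset.Icc_self, Finset.sum_singleton, show Finset.Icc 1 0 = (∅ : Finset ℕ) from rfl,
    Finset.sum_empty, add_zero]
  congr 1
  refine smul_T_congr ?_ (by norm_num)
  rw [hP, mul_one, show ((2:ℕ):ℤ) - ((1:ℕ):ℤ) = 1 from by norm_num,
    show ((1:ℕ):ℤ) = 1 from by norm_num, zpow_one]
  rw [mul_div_assoc, div_self (by rw [zpow_one] at h1; exact h1), mul_one]

lemma st1 (n : ℕ) : T (-1) * EH (-(n : ℤ)) = EH (-(n : ℤ) - 1) - EH ((n : ℤ) + 1) := by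
  rcases Nat.eq_zero_or_pos n with rfl | h
  · rw [show -((0:ℕ):ℤ)-1 = -((1:ℕ):ℤ) from by norm_num,
      show ((0:ℕ):ℤ)+1 = ((1:ℕ):ℤ) from by norm_num,
      show -((0:ℕ):ℤ) = 0 from by norm_num, EH_zero,
      EH_neg_natCast 1 le_rfl, EH_natCast 1 le_rfl, EHneg_one, EHpos_one]
    rw [mul_one]; abel
  · rw [EH_neg_natCast n h,
      show -((n:ℕ):ℤ)-1 = -((n+1:ℕ):ℤ) from by push_cast; ring,
      show ((n:ℕ):ℤ)+1 = ((n+1:ℕ):ℤ) from by push_cast; ring,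
      EH_neg_natCast (n+1) (by omega), EH_natCast (n+1) (by omega)]
    obtain ⟨t, rfl | rfl⟩ : ∃ t, n = 2*t+1 ∨ n = 2*t+2 := ⟨(n-1)/2, by omega⟩
    · rw [show 2*t+1+1 = 2*t+2 from by omega]
      exact core1b t
    · rw [show 2*t+2+1 = 2*t+3 from by omega]
      exact core1a t

lemma st3 (n : ℕ) :
    T 1 * EH (-(n : ℤ)) = (1 - q ^ (n : ℤ)) • EH (1 - (n : ℤ)) + EH ((n : ℤ) + 1) := by
  rcases Nat.eq_zero_or_pos n with rfl | h
  · rw [show -((0:ℕ):ℤ) = 0 from by norm_num, EH_zero,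
      show ((0:ℕ):ℤ) = (0:ℤ) from by norm_num,
      show (1:ℤ) - 0 = ((1:ℕ):ℤ) from by norm_num,
      show ((0:ℤ)+1) = ((1:ℕ):ℤ) from by norm_num,
      EH_natCast 1 le_rfl, EHpos_one]
    simp
  rcases Nat.lt_or_ge n 2 with h2 | h2
  · interval_cases n
    rw [EH_neg_natCast 1 le_rfl,
      show (1:ℤ) - ((1:ℕ):ℤ) = 0 from by norm_num, EH_zero,
      show ((1:ℕ):ℤ)+1 = ((2:ℕ):ℤ) from by norm_num, EH_natCast 2 (by omega),
      EHneg_one, EHpos_two]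
    have h1 : ((1:ℕ):ℤ) = (1:ℤ) := by norm_num
    rw [h1, mul_add, T_mul_T, T_mul_T, show (1:ℤ) + -1 = 0 from by norm_num,
      show (1:ℤ)+1 = 2 from by norm_num]
    have hq1 : (1:L) = T 0 := T_zero.symm
    rw [hq1, sub_smul, one_smul]
    abel
  · rw [EH_neg_natCast n (by omega)]
    obtain ⟨t, rfl | rfl⟩ : ∃ t, n = 2*t+2 ∨ n = 2*t+3 := ⟨(n-2)/2, by omega⟩
    · rw [show (1:ℤ) - ((2*t+2:ℕ):ℤ) = -((2*t+1:ℕ):ℤ) from by push_cast; ring,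
        EH_neg_natCast (2*t+1) (by omega),
        show ((2*t+2:ℕ):ℤ)+1 = ((2*t+3:ℕ):ℤ) from by push_cast; ring,
        EH_natCast (2*t+3) (by omega),
        show ((2*t+2:ℕ):ℤ) = 2*(t:ℤ)+2 from by push_cast; ring]
      exact core3a t
    · rw [show (1:ℤ) - ((2*t+3:ℕ):ℤ) = -((2*t+2:ℕ):ℤ) from by push_cast; ring,
        EH_neg_natCast (2*t+2) (by omega),
        show ((2*t+3:ℕ):ℤ)+1 = ((2*t+4:ℕ):ℤ) from by push_cast; ring,
        EH_natCast (2*t+4) (by omega),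
        show ((2*t+3:ℕ):ℤ) = 2*(t:ℤ)+3 from by push_cast; ring]
      exact core3b t

lemma st4 (n : ℕ) (h : 1 ≤ n) :
    T 1 * EH (n : ℤ) = EH ((n : ℤ) + 1) - q ^ (n : ℤ) • EH (1 - (n : ℤ)) := by
  have A := st1 (n-1)
  rw [show -((n-1:ℕ):ℤ) = 1 - (n:ℤ) from by rw [Nat.cast_sub h]; ring,
    show 1 - (n:ℤ) - 1 = -((n:ℕ):ℤ) from by ring] at A
  rw [show ((n-1:ℕ):ℤ) + 1 = (n:ℤ) from by rw [Nat.cast_sub h]; ring] at A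
  have B := st3 n
  have hEHn : EH ((n:ℤ)) = EH (-(n:ℤ)) - T (-1) * EH (1 - (n:ℤ)) := by
    linear_combination A
  have hTT : (T 1 : L) * (T (-1) * EH (1-(n:ℤ))) = EH (1-(n:ℤ)) := by
    rw [← mul_assoc, T_mul_T, show (1:ℤ) + -1 = 0 from by ring, T_zero, one_mul]
  rw [hEHn, mul_sub, hTT, B, sub_smul, one_smul]
  abel

lemma st2 (n : ℕ) (h : 1 ≤ n) :
    T (-1) * EH (n : ℤ) =
      (1 - q ^ ((n : ℤ) - 1)) • EH ((n : ℤ) - 1) + q ^ ((n : ℤ) - 1) • EH (1 - (n : ℤ)) := by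
  rcases Nat.lt_or_ge n 2 with h2 | h2
  · interval_cases n
    rw [show ((1:ℕ):ℤ) - 1 = 0 from by norm_num, show 1 - ((1:ℕ):ℤ) = 0 from by norm_num,
      EH_zero, zpow_zero, EH_natCast 1 le_rfl, EHpos_one, T_mul_T,
      show (-1:ℤ) + 1 = 0 from by norm_num, T_zero]
    simp
  · have B := st3 (n-1)
    rw [show -((n-1:ℕ):ℤ) = 1 - (n:ℤ) from by rw [Nat.cast_sub (by omega)]; ring,
      show ((n-1:ℕ):ℤ) = (n:ℤ) - 1 from by rw [Nat.cast_sub (by omega)]; ring,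
      show 1 - ((n:ℤ)-1) = 2 - (n:ℤ) from by ring,
      show ((n:ℤ)-1) + 1 = (n:ℤ) from by ring] at B
    have A := st1 (n-2)
    rw [show -((n-2:ℕ):ℤ) = 2 - (n:ℤ) from by rw [Nat.cast_sub (by omega)]; push_cast; ring,
      show ((n-2:ℕ):ℤ) = (n:ℤ) - 2 from by rw [Nat.cast_sub (by omega)]; push_cast; ring,
      show 2 - (n:ℤ) - 1 = 1 - (n:ℤ) from by ring,
      show ((n:ℤ)-2) + 1 = (n:ℤ) - 1 from by ring] at A
    have hEHn : EH ((n:ℤ)) = T 1 * EH (1 - (n:ℤ)) - (1 - q ^ ((n:ℤ)-1)) • EH (2 - (n:ℤ)) := by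
      linear_combination -B
    have hTT : (T (-1) : L) * (T 1 * EH (1-(n:ℤ))) = EH (1-(n:ℤ)) := by
      rw [← mul_assoc, T_mul_T, show (-1:ℤ) + 1 = 0 from by ring, T_zero, one_mul]
    rw [hEHn, mul_sub, mul_smul_comm, hTT, A, smul_sub, sub_smul, one_smul]
    abel

/-- Pieri rules for nonsymmetric q-Hermite polynomials (here `T 1 = X`, `T (-1) = X⁻¹`):
`X⁻¹·Ē_{-n} = Ē_{-n-1} - Ē_{n+1}` for all `n ≥ 0`;
`X⁻¹·Ē_n = (1 - q^{n-1})·Ē_{n-1} + q^{n-1}·Ē_{1-n}` for all `n ≥ 1`;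
`X·Ē_{-n} = (1 - qⁿ)·Ē_{1-n} + Ē_{n+1}` for all `n ≥ 0`;
`X·Ē_n = Ē_{n+1} - qⁿ·Ē_{1-n}` for all `n ≥ 1`. -/
theorem hermite_pieri_rules :
    (∀ n : ℕ, T (-1) * EH (-(n : ℤ)) = EH (-(n : ℤ) - 1) - EH ((n : ℤ) + 1)) ∧
    (∀ n : ℕ, 1 ≤ n →
      T (-1) * EH (n : ℤ) =
        (1 - q ^ ((n : ℤ) - 1)) • EH ((n : ℤ) - 1) + q ^ ((n : ℤ) - 1) • EH (1 - (n : ℤ))) ∧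
    (∀ n : ℕ, T 1 * EH (-(n : ℤ)) = (1 - q ^ (n : ℤ)) • EH (1 - (n : ℤ)) + EH ((n : ℤ) + 1)) ∧
    (∀ n : ℕ, 1 ≤ n →
      T 1 * EH (n : ℤ) = EH ((n : ℤ) + 1) - q ^ (n : ℤ) • EH (1 - (n : ℤ))) :=
  ⟨st1, st2, st3, st4⟩
end
end

section
/- The symmetrized spinor Dunkl operator yields the q-Toda operator: T̂ ∘ (Ŷ + Ŷ′) = (Ŷ + Ŷ′) ∘ T̂ on V, and for every f ∈ L one has (Ŷ + Ŷ′)(f, f) = (𝒯(f), 𝒯(f)), where 𝒯 is the q-Toda operator 𝒯(f) := Γ^{-1}(f) + (1 − X^{-2})·Γ(f). In particular Ŷ + Ŷ′ preserves the subspace of symmetric spinors {(f,f) : f ∈ L} and acts on it as the q-Toda operator. -/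
/-!
The spinor Dunkl operators for the q-Toda theory of type A₁, acting on the space
`V = L × L` of spinors, where `L = K[X,X⁻¹]` is the ring of Laurent polynomials over
`K = ℚ(u)`, `q = u⁴`.
-/

noncomputable section

open LaurentPolynomial

/-- The space of spinors: pairs of Laurent polynomials. -/
abbrev V : Type := L × L

/-- The `K`-algebra automorphism `Γ` of `L` with `Γ(X) = q^{1/2}X`. -/
def gam (f : L) : L := f.coeff.sum fun e r => (r * (u ^ 2) ^ e) • T e

/-- The inverse automorphism `Γ⁻¹`, with `Γ⁻¹(X) = q^{-1/2}X`. -/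
def gamInv (f : L) : L := f.coeff.sum fun e r => (r * (u ^ 2) ^ (-e)) • T e

/-- The spinor operator `T̂(f₁,f₂) = (0, f₁ - f₂)`. -/
def That (p : V) : V := (0, p.1 - p.2)

/-- The spinor operator `π̂(f₁,f₂) = (X·f₂ + X⁻¹·(f₁-f₂), X⁻¹·(f₁-f₂))`. -/
def piHat (p : V) : V :=
  (T 1 * p.2 + T (-1) * (p.1 - p.2), T (-1) * (p.1 - p.2))

/-- The spinor Dunkl operator
`Ŷ(f₁,f₂) = (Γ⁻¹(f₁-f₂), Γ(f₂) - Γ(X⁻²·(f₂-f₁)))`. -/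
def Yhat (p : V) : V :=
  (gamInv (p.1 - p.2), gam p.2 - gam (T (-2) * (p.2 - p.1)))

/-- The spinor Dunkl operator
`Ŷ′(f₁,f₂) = ((1-X⁻²)·Γ(f₁) + Γ⁻¹(f₂), Γ⁻¹(f₂) - X⁻²·Γ(f₁))`. -/
def Yhat' (p : V) : V :=
  ((1 - T (-2)) * gam p.1 + gamInv p.2, gamInv p.2 - T (-2) * gam p.1)
/-- The q-Toda operator `𝒯(f) = Γ⁻¹(f) + (1 - X⁻²)·Γ(f)`. -/
def qToda (f : L) : L := gamInv f + (1 - T (-2)) * gam f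

lemma gam_add (f g : L) : gam (f + g) = gam f + gam g := by
  unfold gam
  rw [AddMonoidAlgebra.coeff_add]
  rw [Finsupp.sum_add_index'] <;> intros <;> simp [add_mul, add_smul]

lemma gam_neg (f : L) : gam (-f) = - gam f := by
  unfold gam
  rw [AddMonoidAlgebra.coeff_neg]
  rw [Finsupp.sum_neg_index] <;> intros <;> simp [neg_mul, neg_smul, Finsupp.sum_neg]

lemma gam_sub (f g : L) : gam (f - g) = gam f - gam g := by
  rw [sub_eq_add_neg, gam_add, gam_neg, sub_eq_add_neg]

lemma gam_zero : gam (0 : L) = 0 := by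
  unfold gam; simp

lemma gamInv_add (f g : L) : gamInv (f + g) = gamInv f + gamInv g := by
  unfold gamInv
  rw [AddMonoidAlgebra.coeff_add]
  rw [Finsupp.sum_add_index'] <;> intros <;> simp [add_mul, add_smul]

lemma gamInv_neg (f : L) : gamInv (-f) = - gamInv f := by
  unfold gamInv
  rw [AddMonoidAlgebra.coeff_neg]
  rw [Finsupp.sum_neg_index] <;> intros <;> simp [neg_mul, neg_smul, Finsupp.sum_neg]

lemma gamInv_sub (f g : L) : gamInv (f - g) = gamInv f - gamInv g := by
  rw [sub_eq_add_neg, gamInv_add, gamInv_neg, sub_eq_add_neg]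

lemma gamInv_zero : gamInv (0 : L) = 0 := by
  unfold gamInv; simp

/-- The symmetrized spinor Dunkl operator yields the q-Toda operator:
`T̂∘(Ŷ+Ŷ′) = (Ŷ+Ŷ′)∘T̂` on `V`, and for every `f ∈ L` one has
`(Ŷ+Ŷ′)(f,f) = (𝒯(f), 𝒯(f))`.  In particular `Ŷ+Ŷ′` preserves the subspace of
symmetric spinors `{(f,f) : f ∈ L}` and acts on it as the q-Toda operator. -/
theorem spinor_dunkl_symmetrization_qToda :
    (∀ p : V, That (Yhat p + Yhat' p) = Yhat (That p) + Yhat' (That p)) ∧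
    (∀ f : L, Yhat (f, f) + Yhat' (f, f) = (qToda f, qToda f)) := by
  constructor
  · intro p
    have key : T (-2) * (p.2 - p.1) = -(T (-2) * (p.1 - p.2)) := by ring
    simp only [That, Yhat, Yhat', Prod.mk_add_mk, Prod.fst, Prod.snd, key, gam_neg,
      gam_sub, gamInv_sub, gam_zero, gamInv_zero, zero_sub, sub_zero]
    simp only [Prod.mk.injEq, mul_zero, gamInv_neg, gamInv_sub, gam_sub]
    constructor <;> ring
  · intro f
    simp only [Yhat, Yhat', Prod.mk_add_mk, sub_self, mul_zero, gam_zero, gamInv_zero,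
      qToda]
    simp only [Prod.mk.injEq]
    constructor <;> ring
end
end
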